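/- Let A ∈ SL(2,ℤ) with Tr(A) ≠ 2, p a prime, A ≢ I mod p, and Tr(A) ≡ 2 mod p. Then p does not divide A(1) = gcd(a-1,b,c,d-1) but p divides A(2) = |Tr(A)-2|/A(1). -/

import Mathlib

theorem stmt2 (p : ℕ) (hp : p.Prime) (A : Matrix.SpecialLinearGroup (Fin 2) ℤ)
    (htr : Matrix.trace A.1 ≠ 2)
    (hA : (A.1.map (Int.cast : ℤ → ZMod p)) ≠ 1)
    (htrp : ((Matrix.trace A.1 : ℤ) : ZMod p) = 2) :
    ¬ (p : ℤ) ∣ (Int.gcd (Int.gcd (A.1 0 0 - 1) (A.1 0 1)) (Int.gcd (A.1 1 0) (A.1 1 1 - 1)) : ℤ) ∧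
    (p : ℤ) ∣ |Matrix.trace A.1 - 2| /
      (Int.gcd (Int.gcd (A.1 0 0 - 1) (A.1 0 1)) (Int.gcd (A.1 1 0) (A.1 1 1 - 1)) : ℤ) := by
  set g : ℤ := (Int.gcd (Int.gcd (A.1 0 0 - 1) (A.1 0 1)) (Int.gcd (A.1 1 0) (A.1 1 1 - 1)) : ℤ)
    with hg
  have ha : g ∣ A.1 0 0 - 1 := dvd_trans (Int.gcd_dvd_left _ _) (Int.gcd_dvd_left _ _)
  have hb : g ∣ A.1 0 1 := dvd_trans (Int.gcd_dvd_left _ _) (Int.gcd_dvd_right _ _)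
  have hc : g ∣ A.1 1 0 := dvd_trans (Int.gcd_dvd_right _ _) (Int.gcd_dvd_left _ _)
  have hd : g ∣ A.1 1 1 - 1 := dvd_trans (Int.gcd_dvd_right _ _) (Int.gcd_dvd_right _ _)
  have htr2 : Matrix.trace A.1 = A.1 0 0 + A.1 1 1 := by
    simp [Matrix.trace, Matrix.diag, Fin.sum_univ_two]
  have heq : Matrix.trace A.1 - 2 = (A.1 0 0 - 1) + (A.1 1 1 - 1) := by rw [htr2]; ring
  have hgdvd : g ∣ Matrix.trace A.1 - 2 := heq ▸ dvd_add ha hd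
  have hgne : g ≠ 0 := by
    intro h0
    rw [h0] at ha hd
    apply htr
    rw [htr2]
    have h1 := zero_dvd_iff.mp ha
    have h2 := zero_dvd_iff.mp hd
    linarith [sub_eq_zero.mp h1, sub_eq_zero.mp h2]
  have hpg : ¬ (p : ℤ) ∣ g := by
    intro h
    apply hA
    have key : ∀ x : ℤ, (p : ℤ) ∣ x - 1 → ((x : ZMod p) = 1) := by
      intro x hx
      have := (ZMod.intCast_zmod_eq_zero_iff_dvd (x - 1) p).mpr hx
      push_cast at this
      linear_combination this
    have key0 : ∀ x : ℤ, (p : ℤ) ∣ x → ((x : ZMod p) = 0) := fun x hx =>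
      (ZMod.intCast_zmod_eq_zero_iff_dvd x p).mpr hx
    ext i j
    fin_cases i <;> fin_cases j <;>
      simp [Matrix.map_apply, Matrix.one_apply,
        key _ (h.trans ha), key _ (h.trans hd), key0 _ (h.trans hb), key0 _ (h.trans hc)]
  have hptr : (p : ℤ) ∣ Matrix.trace A.1 - 2 := by
    apply (ZMod.intCast_zmod_eq_zero_iff_dvd _ p).mp
    push_cast
    rw [htrp]
    ring
  have hcop : IsCoprime ((p : ℤ)) g :=
    ((Int.prime_iff_natAbs_prime.mpr (by simpa using hp)).irreducible.coprime_iff_not_dvd).mpr hpg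
  obtain ⟨k, hk⟩ := hgdvd
  have hkdvd : (p : ℤ) ∣ k := hcop.dvd_of_dvd_mul_left (hk ▸ hptr)
  have hdiveq : (Matrix.trace A.1 - 2) / g = k := by
    rw [hk, Int.mul_ediv_cancel_left _ hgne]
  refine ⟨hpg, ?_⟩
  rcases abs_cases (Matrix.trace A.1 - 2) with ⟨habs, _⟩ | ⟨habs, _⟩
  · rw [habs, hdiveq]; exact hkdvd
  · rw [habs, Int.neg_ediv_of_dvd ⟨k, hk⟩, hdiveq]
    exact hkdvd.neg_right
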